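/- Suppose every node v ∈ V satisfies W_v < 1+ε, and every node at level ℓ(v) > 0 satisfies W_v ≥ 1−ε, where W_v = Σ_{u∈N_v} (1+ε)^{-max(ℓ(u),ℓ(v))}. Then the set V* = { v ∈ V : W_v ≥ 1−ε } is a vertex cover of G, i.e., every edge of G has at least one endpoint in V*. -/

import Mathlib

theorem heavy_nodes_form_vertex_cover {V : Type*} [Fintype V] [DecidableEq V]
    (G : SimpleGraph V) [DecidableRel G.Adj]
    (ε : ℝ) (hε0 : 0 < ε) (hε1 : ε < 1) (ℓ : V → ℕ)
    (W : V → ℝ)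
    (hW : ∀ v, W v = ∑ u ∈ G.neighborFinset v, ((1 + ε)⁻¹) ^ (max (ℓ u) (ℓ v)))
    (hub : ∀ v, W v < 1 + ε)
    (hlb : ∀ v, 0 < ℓ v → 1 - ε ≤ W v) :
    ∀ x y, G.Adj x y → 1 - ε ≤ W x ∨ 1 - ε ≤ W y := by
  intro x y hxy
  rcases Nat.eq_zero_or_pos (ℓ x) with hx | hx
  · rcases Nat.eq_zero_or_pos (ℓ y) with hy | hy
    · left
      rw [hW]
      have hmem : y ∈ G.neighborFinset x := by
        rw [SimpleGraph.mem_neighborFinset]; exact hxy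
      have h1 : ((1 + ε)⁻¹) ^ (max (ℓ y) (ℓ x)) = 1 := by
        rw [hx, hy]; simp
      have := Finset.single_le_sum (f := fun u => ((1 + ε)⁻¹) ^ (max (ℓ u) (ℓ x)))
        (fun u _ => by positivity) hmem
      rw [h1] at this
      linarith
    · right; exact hlb y hy
  · left; exact hlb x hx
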